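/- With Q and E as in the generic setup over ℤ in 21 indeterminates, every 2×2 minor of E equals, up to sign, a 4×4 minor of Q whose column set contains columns 1 and 2; that is, for every 2×2 minor m of E there exist a choice of 4 rows of Q and 4 columns of Q including columns 1 and 2 such that m = ±(the corresponding 4×4 minor of Q). Conversely, every 4×4 minor of Q involving columns 1 and 2 equals ± some 2×2 minor of E. -/

import Mathlib

open Matrix

noncomputable section

/-- The polynomial ring `ℤ[x_{ikl}]`. -/
abbrev PR := MvPolynomial (ℕ × ℕ × ℕ) ℤ

/-- The indeterminate `x_{ikl}`. -/
def xv (i k l : ℕ) : PR := MvPolynomial.X (i, k, l)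

/-- The generic 6×5 matrix `Q` in the 21 indeterminates. -/
def Qgen : Matrix (Fin 6) (Fin 5) PR :=
  !![0, xv 2 1 1, xv 3 1 1, xv 4 1 1, xv 5 1 1;
     0, xv 2 1 2, xv 3 1 2, xv 4 1 2, xv 5 1 2;
     0, xv 2 1 3, xv 3 1 3, xv 4 1 3, xv 5 1 3;
     -xv 2 1 1, 0, xv 3 2 1, xv 4 2 1, xv 5 2 1;
     -xv 2 1 2, 0, xv 3 2 2, xv 4 2 2, xv 5 2 2;
     -xv 2 1 3, 0, xv 3 2 3, xv 4 2 3, xv 5 2 3]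

/-- The unit step function on integers. -/
def uStep (x : ℤ) : ℤ := if 0 < x then 1 else 0

/-- `σ_{i,j,r}`. -/
def sigma3 (i j r : ℤ) : ℤ :=
  (Int.negOnePow (i + j + r + 1 + uStep (r - i) + uStep (r - j) + uStep (j - i)) : ℤ)

/-- `σ_{i,j,r,h,k}`. -/
def sigma5 (i j r h k : ℤ) : ℤ :=
  (Int.negOnePow (h + k + 1 + uStep (k - i) + uStep (k - j) + uStep (k - r) + uStep (k - h)
    + uStep (h - i) + uStep (h - j) + uStep (h - r)) : ℤ)

/-- One-based row index into `Fin 6`. -/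
def row6 (n : ℕ) : Fin 6 := ⟨(n - 1) % 6, Nat.mod_lt _ (by norm_num)⟩

/-- One-based column index into `Fin 5`. -/
def col5 (n : ℕ) : Fin 5 := ⟨(n - 1) % 5, Nat.mod_lt _ (by norm_num)⟩

/-- `d^{k,i,j}_{α,β}` where `{r,h} = {1,…,5} \ {i,j,k}` (supplied explicitly):
`σ_{i,j,r} σ_{i,j,r,h,k} · det (Q_{3(k-1)+α,h}, Q_{3(k-1)+α,r}; Q_{3(k-1)+β,h}, Q_{3(k-1)+β,r})`,
all indices one-based. -/
def dE (k i j r h α β : ℕ) : PR :=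
  (sigma3 i j r * sigma5 i j r h k) •
    (Qgen (row6 (3 * (k - 1) + α)) (col5 h) * Qgen (row6 (3 * (k - 1) + β)) (col5 r) -
     Qgen (row6 (3 * (k - 1) + α)) (col5 r) * Qgen (row6 (3 * (k - 1) + β)) (col5 h))

/-- The generic 6×3 matrix `E`, rows indexed by `(k,α,β)` in the order
`(1,1,2),(1,1,3),(1,2,3),(2,1,2),(2,1,3),(2,2,3)` and columns by `(i,j)` in the order
`(3,4),(3,5),(4,5)`. -/
def Egen : Matrix (Fin 6) (Fin 3) PR :=
  !![dE 1 3 4 2 5 1 2, dE 1 3 5 2 4 1 2, dE 1 4 5 2 3 1 2;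
     dE 1 3 4 2 5 1 3, dE 1 3 5 2 4 1 3, dE 1 4 5 2 3 1 3;
     dE 1 3 4 2 5 2 3, dE 1 3 5 2 4 2 3, dE 1 4 5 2 3 2 3;
     dE 2 3 4 1 5 1 2, dE 2 3 5 1 4 1 2, dE 2 4 5 1 3 1 2;
     dE 2 3 4 1 5 1 3, dE 2 3 5 1 4 1 3, dE 2 4 5 1 3 1 3;
     dE 2 3 4 1 5 2 3, dE 2 3 5 1 4 2 3, dE 2 4 5 1 3 2 3]

-- ===== auxiliary machinery =====

lemma r61 : row6 1 = 0 := rfl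
lemma r62 : row6 2 = 1 := rfl
lemma r63 : row6 3 = 2 := rfl
lemma r64 : row6 4 = 3 := rfl
lemma r65 : row6 5 = 4 := rfl
lemma r66 : row6 6 = 5 := rfl
lemma c51 : col5 1 = 0 := rfl
lemma c52 : col5 2 = 1 := rfl
lemma c53 : col5 3 = 2 := rfl
lemma c54 : col5 4 = 3 := rfl
lemma c55 : col5 5 = 4 := rfl

lemma Qe_0_0 : Qgen 0 0 = 0 := rfl
lemma Qe_0_1 : Qgen 0 1 = xv 2 1 1 := rfl
lemma Qe_0_2 : Qgen 0 2 = xv 3 1 1 := rfl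
lemma Qe_0_3 : Qgen 0 3 = xv 4 1 1 := rfl
lemma Qe_0_4 : Qgen 0 4 = xv 5 1 1 := rfl
lemma Qe_1_0 : Qgen 1 0 = 0 := rfl
lemma Qe_1_1 : Qgen 1 1 = xv 2 1 2 := rfl
lemma Qe_1_2 : Qgen 1 2 = xv 3 1 2 := rfl
lemma Qe_1_3 : Qgen 1 3 = xv 4 1 2 := rfl
lemma Qe_1_4 : Qgen 1 4 = xv 5 1 2 := rfl
lemma Qe_2_0 : Qgen 2 0 = 0 := rfl
lemma Qe_2_1 : Qgen 2 1 = xv 2 1 3 := rfl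
lemma Qe_2_2 : Qgen 2 2 = xv 3 1 3 := rfl
lemma Qe_2_3 : Qgen 2 3 = xv 4 1 3 := rfl
lemma Qe_2_4 : Qgen 2 4 = xv 5 1 3 := rfl
lemma Qe_3_0 : Qgen 3 0 = -xv 2 1 1 := rfl
lemma Qe_3_1 : Qgen 3 1 = 0 := rfl
lemma Qe_3_2 : Qgen 3 2 = xv 3 2 1 := rfl
lemma Qe_3_3 : Qgen 3 3 = xv 4 2 1 := rfl
lemma Qe_3_4 : Qgen 3 4 = xv 5 2 1 := rfl
lemma Qe_4_0 : Qgen 4 0 = -xv 2 1 2 := rfl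
lemma Qe_4_1 : Qgen 4 1 = 0 := rfl
lemma Qe_4_2 : Qgen 4 2 = xv 3 2 2 := rfl
lemma Qe_4_3 : Qgen 4 3 = xv 4 2 2 := rfl
lemma Qe_4_4 : Qgen 4 4 = xv 5 2 2 := rfl
lemma Qe_5_0 : Qgen 5 0 = -xv 2 1 3 := rfl
lemma Qe_5_1 : Qgen 5 1 = 0 := rfl
lemma Qe_5_2 : Qgen 5 2 = xv 3 2 3 := rfl
lemma Qe_5_3 : Qgen 5 3 = xv 4 2 3 := rfl
lemma Qe_5_4 : Qgen 5 4 = xv 5 2 3 := rfl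

lemma E_0_0 : Egen 0 0 = xv 2 1 1 * xv 5 1 2 - xv 2 1 2 * xv 5 1 1 := by
  rw [show Egen 0 0 = dE 1 3 4 2 5 1 2 from rfl]
  have h : sigma3 3 4 2 * sigma5 3 4 2 5 1 = -1 := by decide
  show (sigma3 3 4 2 * sigma5 3 4 2 5 1) • _ = _
  rw [h, show (3*(1-1)+1 : ℕ) = 1 from rfl, show (3*(1-1)+2 : ℕ) = 2 from rfl,
    r61, r62, c55, c52, Qe_0_4, Qe_1_1, Qe_0_1, Qe_1_4]
  simp only [one_smul, neg_one_zsmul, neg_smul]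
  ring

lemma E_0_1 : Egen 0 1 = -(xv 2 1 1 * xv 4 1 2) + xv 2 1 2 * xv 4 1 1 := by
  rw [show Egen 0 1 = dE 1 3 5 2 4 1 2 from rfl]
  have h : sigma3 3 5 2 * sigma5 3 5 2 4 1 = 1 := by decide
  show (sigma3 3 5 2 * sigma5 3 5 2 4 1) • _ = _
  rw [h, show (3*(1-1)+1 : ℕ) = 1 from rfl, show (3*(1-1)+2 : ℕ) = 2 from rfl,
    r61, r62, c54, c52, Qe_0_3, Qe_1_1, Qe_0_1, Qe_1_3]
  simp only [one_smul, neg_one_zsmul, neg_smul]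
  ring

lemma E_0_2 : Egen 0 2 = xv 2 1 1 * xv 3 1 2 - xv 2 1 2 * xv 3 1 1 := by
  rw [show Egen 0 2 = dE 1 4 5 2 3 1 2 from rfl]
  have h : sigma3 4 5 2 * sigma5 4 5 2 3 1 = -1 := by decide
  show (sigma3 4 5 2 * sigma5 4 5 2 3 1) • _ = _
  rw [h, show (3*(1-1)+1 : ℕ) = 1 from rfl, show (3*(1-1)+2 : ℕ) = 2 from rfl,
    r61, r62, c53, c52, Qe_0_2, Qe_1_1, Qe_0_1, Qe_1_2]
  simp only [one_smul, neg_one_zsmul, neg_smul]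
  ring

lemma E_1_0 : Egen 1 0 = xv 2 1 1 * xv 5 1 3 - xv 2 1 3 * xv 5 1 1 := by
  rw [show Egen 1 0 = dE 1 3 4 2 5 1 3 from rfl]
  have h : sigma3 3 4 2 * sigma5 3 4 2 5 1 = -1 := by decide
  show (sigma3 3 4 2 * sigma5 3 4 2 5 1) • _ = _
  rw [h, show (3*(1-1)+1 : ℕ) = 1 from rfl, show (3*(1-1)+3 : ℕ) = 3 from rfl,
    r61, r63, c55, c52, Qe_0_4, Qe_2_1, Qe_0_1, Qe_2_4]
  simp only [one_smul, neg_one_zsmul, neg_smul]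
  ring

lemma E_1_1 : Egen 1 1 = -(xv 2 1 1 * xv 4 1 3) + xv 2 1 3 * xv 4 1 1 := by
  rw [show Egen 1 1 = dE 1 3 5 2 4 1 3 from rfl]
  have h : sigma3 3 5 2 * sigma5 3 5 2 4 1 = 1 := by decide
  show (sigma3 3 5 2 * sigma5 3 5 2 4 1) • _ = _
  rw [h, show (3*(1-1)+1 : ℕ) = 1 from rfl, show (3*(1-1)+3 : ℕ) = 3 from rfl,
    r61, r63, c54, c52, Qe_0_3, Qe_2_1, Qe_0_1, Qe_2_3]
  simp only [one_smul, neg_one_zsmul, neg_smul]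
  ring

lemma E_1_2 : Egen 1 2 = xv 2 1 1 * xv 3 1 3 - xv 2 1 3 * xv 3 1 1 := by
  rw [show Egen 1 2 = dE 1 4 5 2 3 1 3 from rfl]
  have h : sigma3 4 5 2 * sigma5 4 5 2 3 1 = -1 := by decide
  show (sigma3 4 5 2 * sigma5 4 5 2 3 1) • _ = _
  rw [h, show (3*(1-1)+1 : ℕ) = 1 from rfl, show (3*(1-1)+3 : ℕ) = 3 from rfl,
    r61, r63, c53, c52, Qe_0_2, Qe_2_1, Qe_0_1, Qe_2_2]
  simp only [one_smul, neg_one_zsmul, neg_smul]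
  ring

lemma E_2_0 : Egen 2 0 = xv 2 1 2 * xv 5 1 3 - xv 2 1 3 * xv 5 1 2 := by
  rw [show Egen 2 0 = dE 1 3 4 2 5 2 3 from rfl]
  have h : sigma3 3 4 2 * sigma5 3 4 2 5 1 = -1 := by decide
  show (sigma3 3 4 2 * sigma5 3 4 2 5 1) • _ = _
  rw [h, show (3*(1-1)+2 : ℕ) = 2 from rfl, show (3*(1-1)+3 : ℕ) = 3 from rfl,
    r62, r63, c55, c52, Qe_1_4, Qe_2_1, Qe_1_1, Qe_2_4]
  simp only [one_smul, neg_one_zsmul, neg_smul]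
  ring

lemma E_2_1 : Egen 2 1 = -(xv 2 1 2 * xv 4 1 3) + xv 2 1 3 * xv 4 1 2 := by
  rw [show Egen 2 1 = dE 1 3 5 2 4 2 3 from rfl]
  have h : sigma3 3 5 2 * sigma5 3 5 2 4 1 = 1 := by decide
  show (sigma3 3 5 2 * sigma5 3 5 2 4 1) • _ = _
  rw [h, show (3*(1-1)+2 : ℕ) = 2 from rfl, show (3*(1-1)+3 : ℕ) = 3 from rfl,
    r62, r63, c54, c52, Qe_1_3, Qe_2_1, Qe_1_1, Qe_2_3]
  simp only [one_smul, neg_one_zsmul, neg_smul]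
  ring

lemma E_2_2 : Egen 2 2 = xv 2 1 2 * xv 3 1 3 - xv 2 1 3 * xv 3 1 2 := by
  rw [show Egen 2 2 = dE 1 4 5 2 3 2 3 from rfl]
  have h : sigma3 4 5 2 * sigma5 4 5 2 3 1 = -1 := by decide
  show (sigma3 4 5 2 * sigma5 4 5 2 3 1) • _ = _
  rw [h, show (3*(1-1)+2 : ℕ) = 2 from rfl, show (3*(1-1)+3 : ℕ) = 3 from rfl,
    r62, r63, c53, c52, Qe_1_2, Qe_2_1, Qe_1_1, Qe_2_2]
  simp only [one_smul, neg_one_zsmul, neg_smul]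
  ring

lemma E_3_0 : Egen 3 0 = xv 2 1 1 * xv 5 2 2 - xv 2 1 2 * xv 5 2 1 := by
  rw [show Egen 3 0 = dE 2 3 4 1 5 1 2 from rfl]
  have h : sigma3 3 4 1 * sigma5 3 4 1 5 2 = 1 := by decide
  show (sigma3 3 4 1 * sigma5 3 4 1 5 2) • _ = _
  rw [h, show (3*(2-1)+1 : ℕ) = 4 from rfl, show (3*(2-1)+2 : ℕ) = 5 from rfl,
    r64, r65, c55, c51, Qe_3_4, Qe_4_0, Qe_3_0, Qe_4_4]
  simp only [one_smul, neg_one_zsmul, neg_smul]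
  ring

lemma E_3_1 : Egen 3 1 = -(xv 2 1 1 * xv 4 2 2) + xv 2 1 2 * xv 4 2 1 := by
  rw [show Egen 3 1 = dE 2 3 5 1 4 1 2 from rfl]
  have h : sigma3 3 5 1 * sigma5 3 5 1 4 2 = -1 := by decide
  show (sigma3 3 5 1 * sigma5 3 5 1 4 2) • _ = _
  rw [h, show (3*(2-1)+1 : ℕ) = 4 from rfl, show (3*(2-1)+2 : ℕ) = 5 from rfl,
    r64, r65, c54, c51, Qe_3_3, Qe_4_0, Qe_3_0, Qe_4_3]
  simp only [one_smul, neg_one_zsmul, neg_smul]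
  ring

lemma E_3_2 : Egen 3 2 = xv 2 1 1 * xv 3 2 2 - xv 2 1 2 * xv 3 2 1 := by
  rw [show Egen 3 2 = dE 2 4 5 1 3 1 2 from rfl]
  have h : sigma3 4 5 1 * sigma5 4 5 1 3 2 = 1 := by decide
  show (sigma3 4 5 1 * sigma5 4 5 1 3 2) • _ = _
  rw [h, show (3*(2-1)+1 : ℕ) = 4 from rfl, show (3*(2-1)+2 : ℕ) = 5 from rfl,
    r64, r65, c53, c51, Qe_3_2, Qe_4_0, Qe_3_0, Qe_4_2]
  simp only [one_smul, neg_one_zsmul, neg_smul]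
  ring

lemma E_4_0 : Egen 4 0 = xv 2 1 1 * xv 5 2 3 - xv 2 1 3 * xv 5 2 1 := by
  rw [show Egen 4 0 = dE 2 3 4 1 5 1 3 from rfl]
  have h : sigma3 3 4 1 * sigma5 3 4 1 5 2 = 1 := by decide
  show (sigma3 3 4 1 * sigma5 3 4 1 5 2) • _ = _
  rw [h, show (3*(2-1)+1 : ℕ) = 4 from rfl, show (3*(2-1)+3 : ℕ) = 6 from rfl,
    r64, r66, c55, c51, Qe_3_4, Qe_5_0, Qe_3_0, Qe_5_4]
  simp only [one_smul, neg_one_zsmul, neg_smul]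
  ring

lemma E_4_1 : Egen 4 1 = -(xv 2 1 1 * xv 4 2 3) + xv 2 1 3 * xv 4 2 1 := by
  rw [show Egen 4 1 = dE 2 3 5 1 4 1 3 from rfl]
  have h : sigma3 3 5 1 * sigma5 3 5 1 4 2 = -1 := by decide
  show (sigma3 3 5 1 * sigma5 3 5 1 4 2) • _ = _
  rw [h, show (3*(2-1)+1 : ℕ) = 4 from rfl, show (3*(2-1)+3 : ℕ) = 6 from rfl,
    r64, r66, c54, c51, Qe_3_3, Qe_5_0, Qe_3_0, Qe_5_3]
  simp only [one_smul, neg_one_zsmul, neg_smul]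
  ring

lemma E_4_2 : Egen 4 2 = xv 2 1 1 * xv 3 2 3 - xv 2 1 3 * xv 3 2 1 := by
  rw [show Egen 4 2 = dE 2 4 5 1 3 1 3 from rfl]
  have h : sigma3 4 5 1 * sigma5 4 5 1 3 2 = 1 := by decide
  show (sigma3 4 5 1 * sigma5 4 5 1 3 2) • _ = _
  rw [h, show (3*(2-1)+1 : ℕ) = 4 from rfl, show (3*(2-1)+3 : ℕ) = 6 from rfl,
    r64, r66, c53, c51, Qe_3_2, Qe_5_0, Qe_3_0, Qe_5_2]
  simp only [one_smul, neg_one_zsmul, neg_smul]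
  ring

lemma E_5_0 : Egen 5 0 = xv 2 1 2 * xv 5 2 3 - xv 2 1 3 * xv 5 2 2 := by
  rw [show Egen 5 0 = dE 2 3 4 1 5 2 3 from rfl]
  have h : sigma3 3 4 1 * sigma5 3 4 1 5 2 = 1 := by decide
  show (sigma3 3 4 1 * sigma5 3 4 1 5 2) • _ = _
  rw [h, show (3*(2-1)+2 : ℕ) = 5 from rfl, show (3*(2-1)+3 : ℕ) = 6 from rfl,
    r65, r66, c55, c51, Qe_4_4, Qe_5_0, Qe_4_0, Qe_5_4]
  simp only [one_smul, neg_one_zsmul, neg_smul]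
  ring

lemma E_5_1 : Egen 5 1 = -(xv 2 1 2 * xv 4 2 3) + xv 2 1 3 * xv 4 2 2 := by
  rw [show Egen 5 1 = dE 2 3 5 1 4 2 3 from rfl]
  have h : sigma3 3 5 1 * sigma5 3 5 1 4 2 = -1 := by decide
  show (sigma3 3 5 1 * sigma5 3 5 1 4 2) • _ = _
  rw [h, show (3*(2-1)+2 : ℕ) = 5 from rfl, show (3*(2-1)+3 : ℕ) = 6 from rfl,
    r65, r66, c54, c51, Qe_4_3, Qe_5_0, Qe_4_0, Qe_5_3]
  simp only [one_smul, neg_one_zsmul, neg_smul]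
  ring

lemma E_5_2 : Egen 5 2 = xv 2 1 2 * xv 3 2 3 - xv 2 1 3 * xv 3 2 2 := by
  rw [show Egen 5 2 = dE 2 4 5 1 3 2 3 from rfl]
  have h : sigma3 4 5 1 * sigma5 4 5 1 3 2 = 1 := by decide
  show (sigma3 4 5 1 * sigma5 4 5 1 3 2) • _ = _
  rw [h, show (3*(2-1)+2 : ℕ) = 5 from rfl, show (3*(2-1)+3 : ℕ) = 6 from rfl,
    r65, r66, c53, c51, Qe_4_2, Qe_5_0, Qe_4_0, Qe_5_2]
  simp only [one_smul, neg_one_zsmul, neg_smul]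
  ring

lemma det2_sub (M : Matrix (Fin 6) (Fin 3) PR) (a b : Fin 6) (c d : Fin 3) :
    (M.submatrix ![a,b] ![c,d]).det = M a c * M b d - M a d * M b c := by
  rw [Matrix.det_fin_two]
  simp [Matrix.det_fin_two]

lemma det4_sub (M : Matrix (Fin 6) (Fin 5) PR) (r0 r1 r2 r3 : Fin 6) (c0 c1 c2 c3 : Fin 5) :
    (M.submatrix ![r0,r1,r2,r3] ![c0,c1,c2,c3]).det =
      M r0 c0 * (M r1 c1 * (M r2 c2 * M r3 c3 - M r2 c3 * M r3 c2)
               - M r1 c2 * (M r2 c1 * M r3 c3 - M r2 c3 * M r3 c1)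
               + M r1 c3 * (M r2 c1 * M r3 c2 - M r2 c2 * M r3 c1))
    - M r0 c1 * (M r1 c0 * (M r2 c2 * M r3 c3 - M r2 c3 * M r3 c2)
               - M r1 c2 * (M r2 c0 * M r3 c3 - M r2 c3 * M r3 c0)
               + M r1 c3 * (M r2 c0 * M r3 c2 - M r2 c2 * M r3 c0))
    + M r0 c2 * (M r1 c0 * (M r2 c1 * M r3 c3 - M r2 c3 * M r3 c1)
               - M r1 c1 * (M r2 c0 * M r3 c3 - M r2 c3 * M r3 c0)
               + M r1 c3 * (M r2 c0 * M r3 c1 - M r2 c1 * M r3 c0))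
    - M r0 c3 * (M r1 c0 * (M r2 c1 * M r3 c2 - M r2 c2 * M r3 c1)
               - M r1 c1 * (M r2 c0 * M r3 c2 - M r2 c2 * M r3 c0)
               + M r1 c2 * (M r2 c0 * M r3 c1 - M r2 c1 * M r3 c0)) := by
  rw [Matrix.det_succ_row_zero]
  simp only [Fin.sum_univ_succ, Fin.sum_univ_zero, Matrix.det_fin_three]
  simp only [Matrix.submatrix_apply,
    show Fin.succAbove (2:Fin 4) (1:Fin 3) = 1 from rfl,
    show Fin.succAbove (3:Fin 4) (1:Fin 3) = 1 from rfl,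
    show Fin.succAbove (3:Fin 4) (2:Fin 3) = 2 from rfl]
  simp [Matrix.det_succ_row_zero, Fin.sum_univ_succ, Matrix.det_fin_three, Fin.isValue,
    show Fin.succAbove (2:Fin 4) (2:Fin 3) = 3 from rfl,
    show Fin.succAbove (1:Fin 4) (2:Fin 3) = 3 from rfl,
    show Fin.castSucc (2:Fin 3) = (2:Fin 4) from rfl]
  simp only [show Fin.succAbove (2:Fin 4) (1:Fin 3) = 1 from rfl,
    show Fin.succAbove (3:Fin 4) (1:Fin 3) = 1 from rfl,
    show Fin.succAbove (3:Fin 4) (2:Fin 3) = 2 from rfl, Matrix.cons_val_one, Matrix.cons_val_two,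
    Matrix.head_cons, Matrix.cons_val_zero, Matrix.tail_cons]
  ring

def rE : Fin 15 → Fin 2 → Fin 6 :=
  ![![0,1],![0,2],![0,3],![0,4],![0,5],![1,2],![1,3],![1,4],![1,5],![2,3],![2,4],![2,5],![3,4],![3,5],![4,5]]
def cE : Fin 3 → Fin 2 → Fin 3 := ![![0,1],![0,2],![1,2]]
def rQ : Fin 15 → Fin 4 → Fin 6 :=
  ![![0,1,2,3],![0,1,2,4],![0,1,2,5],![0,1,3,4],![0,1,3,5],![0,1,4,5],![0,2,3,4],![0,2,3,5],![0,2,4,5],![0,3,4,5],![1,2,3,4],![1,2,3,5],![1,2,4,5],![1,3,4,5],![2,3,4,5]]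
def cQ : Fin 3 → Fin 4 → Fin 5 := ![![0,1,3,4],![0,1,2,4],![0,1,2,3]]
def rmap : Fin 15 → Fin 15 := ![0,1,3,4,5,2,6,7,8,10,11,12,9,13,14]
def rmapinv : Fin 15 → Fin 15 := ![0,1,5,2,3,4,6,7,8,12,9,10,11,13,14]

lemma key_0_0 : (Egen.submatrix (rE 0) (cE 0)).det = ((Qgen.submatrix (rQ 0) (cQ 0)).det) := by
  rw [show rE 0 = ![0,1] from rfl, show cE 0 = ![0,1] from rfl,
    show rQ 0 = ![0,1,2,3] from rfl,
    show cQ 0 = ![0,1,3,4] from rfl,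
    det2_sub, det4_sub, E_0_0, E_0_1, E_1_0, E_1_1]
  simp only [Qe_0_0, Qe_0_1, Qe_0_3, Qe_0_4, Qe_1_0, Qe_1_1, Qe_1_3, Qe_1_4, Qe_2_0, Qe_2_1, Qe_2_3, Qe_2_4, Qe_3_0, Qe_3_1, Qe_3_3, Qe_3_4]
  ring

lemma key_0_1 : (Egen.submatrix (rE 0) (cE 1)).det = -((Qgen.submatrix (rQ 0) (cQ 1)).det) := by
  rw [show rE 0 = ![0,1] from rfl, show cE 1 = ![0,2] from rfl,
    show rQ 0 = ![0,1,2,3] from rfl,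
    show cQ 1 = ![0,1,2,4] from rfl,
    det2_sub, det4_sub, E_0_0, E_0_2, E_1_0, E_1_2]
  simp only [Qe_0_0, Qe_0_1, Qe_0_2, Qe_0_4, Qe_1_0, Qe_1_1, Qe_1_2, Qe_1_4, Qe_2_0, Qe_2_1, Qe_2_2, Qe_2_4, Qe_3_0, Qe_3_1, Qe_3_2, Qe_3_4]
  ring

lemma key_0_2 : (Egen.submatrix (rE 0) (cE 2)).det = ((Qgen.submatrix (rQ 0) (cQ 2)).det) := by
  rw [show rE 0 = ![0,1] from rfl, show cE 2 = ![1,2] from rfl,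
    show rQ 0 = ![0,1,2,3] from rfl,
    show cQ 2 = ![0,1,2,3] from rfl,
    det2_sub, det4_sub, E_0_1, E_0_2, E_1_1, E_1_2]
  simp only [Qe_0_0, Qe_0_1, Qe_0_2, Qe_0_3, Qe_1_0, Qe_1_1, Qe_1_2, Qe_1_3, Qe_2_0, Qe_2_1, Qe_2_2, Qe_2_3, Qe_3_0, Qe_3_1, Qe_3_2, Qe_3_3]
  ring

lemma key_1_0 : (Egen.submatrix (rE 1) (cE 0)).det = ((Qgen.submatrix (rQ 1) (cQ 0)).det) := by
  rw [show rE 1 = ![0,2] from rfl, show cE 0 = ![0,1] from rfl,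
    show rQ 1 = ![0,1,2,4] from rfl,
    show cQ 0 = ![0,1,3,4] from rfl,
    det2_sub, det4_sub, E_0_0, E_0_1, E_2_0, E_2_1]
  simp only [Qe_0_0, Qe_0_1, Qe_0_3, Qe_0_4, Qe_1_0, Qe_1_1, Qe_1_3, Qe_1_4, Qe_2_0, Qe_2_1, Qe_2_3, Qe_2_4, Qe_4_0, Qe_4_1, Qe_4_3, Qe_4_4]
  ring

lemma key_1_1 : (Egen.submatrix (rE 1) (cE 1)).det = -((Qgen.submatrix (rQ 1) (cQ 1)).det) := by
  rw [show rE 1 = ![0,2] from rfl, show cE 1 = ![0,2] from rfl,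
    show rQ 1 = ![0,1,2,4] from rfl,
    show cQ 1 = ![0,1,2,4] from rfl,
    det2_sub, det4_sub, E_0_0, E_0_2, E_2_0, E_2_2]
  simp only [Qe_0_0, Qe_0_1, Qe_0_2, Qe_0_4, Qe_1_0, Qe_1_1, Qe_1_2, Qe_1_4, Qe_2_0, Qe_2_1, Qe_2_2, Qe_2_4, Qe_4_0, Qe_4_1, Qe_4_2, Qe_4_4]
  ring

lemma key_1_2 : (Egen.submatrix (rE 1) (cE 2)).det = ((Qgen.submatrix (rQ 1) (cQ 2)).det) := by
  rw [show rE 1 = ![0,2] from rfl, show cE 2 = ![1,2] from rfl,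
    show rQ 1 = ![0,1,2,4] from rfl,
    show cQ 2 = ![0,1,2,3] from rfl,
    det2_sub, det4_sub, E_0_1, E_0_2, E_2_1, E_2_2]
  simp only [Qe_0_0, Qe_0_1, Qe_0_2, Qe_0_3, Qe_1_0, Qe_1_1, Qe_1_2, Qe_1_3, Qe_2_0, Qe_2_1, Qe_2_2, Qe_2_3, Qe_4_0, Qe_4_1, Qe_4_2, Qe_4_3]
  ring

lemma key_2_0 : (Egen.submatrix (rE 2) (cE 0)).det = -((Qgen.submatrix (rQ 3) (cQ 0)).det) := by
  rw [show rE 2 = ![0,3] from rfl, show cE 0 = ![0,1] from rfl,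
    show rQ 3 = ![0,1,3,4] from rfl,
    show cQ 0 = ![0,1,3,4] from rfl,
    det2_sub, det4_sub, E_0_0, E_0_1, E_3_0, E_3_1]
  simp only [Qe_0_0, Qe_0_1, Qe_0_3, Qe_0_4, Qe_1_0, Qe_1_1, Qe_1_3, Qe_1_4, Qe_3_0, Qe_3_1, Qe_3_3, Qe_3_4, Qe_4_0, Qe_4_1, Qe_4_3, Qe_4_4]
  ring

lemma key_2_1 : (Egen.submatrix (rE 2) (cE 1)).det = ((Qgen.submatrix (rQ 3) (cQ 1)).det) := by
  rw [show rE 2 = ![0,3] from rfl, show cE 1 = ![0,2] from rfl,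
    show rQ 3 = ![0,1,3,4] from rfl,
    show cQ 1 = ![0,1,2,4] from rfl,
    det2_sub, det4_sub, E_0_0, E_0_2, E_3_0, E_3_2]
  simp only [Qe_0_0, Qe_0_1, Qe_0_2, Qe_0_4, Qe_1_0, Qe_1_1, Qe_1_2, Qe_1_4, Qe_3_0, Qe_3_1, Qe_3_2, Qe_3_4, Qe_4_0, Qe_4_1, Qe_4_2, Qe_4_4]
  ring

lemma key_2_2 : (Egen.submatrix (rE 2) (cE 2)).det = -((Qgen.submatrix (rQ 3) (cQ 2)).det) := by
  rw [show rE 2 = ![0,3] from rfl, show cE 2 = ![1,2] from rfl,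
    show rQ 3 = ![0,1,3,4] from rfl,
    show cQ 2 = ![0,1,2,3] from rfl,
    det2_sub, det4_sub, E_0_1, E_0_2, E_3_1, E_3_2]
  simp only [Qe_0_0, Qe_0_1, Qe_0_2, Qe_0_3, Qe_1_0, Qe_1_1, Qe_1_2, Qe_1_3, Qe_3_0, Qe_3_1, Qe_3_2, Qe_3_3, Qe_4_0, Qe_4_1, Qe_4_2, Qe_4_3]
  ring

lemma key_3_0 : (Egen.submatrix (rE 3) (cE 0)).det = -((Qgen.submatrix (rQ 4) (cQ 0)).det) := by
  rw [show rE 3 = ![0,4] from rfl, show cE 0 = ![0,1] from rfl,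
    show rQ 4 = ![0,1,3,5] from rfl,
    show cQ 0 = ![0,1,3,4] from rfl,
    det2_sub, det4_sub, E_0_0, E_0_1, E_4_0, E_4_1]
  simp only [Qe_0_0, Qe_0_1, Qe_0_3, Qe_0_4, Qe_1_0, Qe_1_1, Qe_1_3, Qe_1_4, Qe_3_0, Qe_3_1, Qe_3_3, Qe_3_4, Qe_5_0, Qe_5_1, Qe_5_3, Qe_5_4]
  ring

lemma key_3_1 : (Egen.submatrix (rE 3) (cE 1)).det = ((Qgen.submatrix (rQ 4) (cQ 1)).det) := by
  rw [show rE 3 = ![0,4] from rfl, show cE 1 = ![0,2] from rfl,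
    show rQ 4 = ![0,1,3,5] from rfl,
    show cQ 1 = ![0,1,2,4] from rfl,
    det2_sub, det4_sub, E_0_0, E_0_2, E_4_0, E_4_2]
  simp only [Qe_0_0, Qe_0_1, Qe_0_2, Qe_0_4, Qe_1_0, Qe_1_1, Qe_1_2, Qe_1_4, Qe_3_0, Qe_3_1, Qe_3_2, Qe_3_4, Qe_5_0, Qe_5_1, Qe_5_2, Qe_5_4]
  ring

lemma key_3_2 : (Egen.submatrix (rE 3) (cE 2)).det = -((Qgen.submatrix (rQ 4) (cQ 2)).det) := by
  rw [show rE 3 = ![0,4] from rfl, show cE 2 = ![1,2] from rfl,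
    show rQ 4 = ![0,1,3,5] from rfl,
    show cQ 2 = ![0,1,2,3] from rfl,
    det2_sub, det4_sub, E_0_1, E_0_2, E_4_1, E_4_2]
  simp only [Qe_0_0, Qe_0_1, Qe_0_2, Qe_0_3, Qe_1_0, Qe_1_1, Qe_1_2, Qe_1_3, Qe_3_0, Qe_3_1, Qe_3_2, Qe_3_3, Qe_5_0, Qe_5_1, Qe_5_2, Qe_5_3]
  ring

lemma key_4_0 : (Egen.submatrix (rE 4) (cE 0)).det = -((Qgen.submatrix (rQ 5) (cQ 0)).det) := by
  rw [show rE 4 = ![0,5] from rfl, show cE 0 = ![0,1] from rfl,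
    show rQ 5 = ![0,1,4,5] from rfl,
    show cQ 0 = ![0,1,3,4] from rfl,
    det2_sub, det4_sub, E_0_0, E_0_1, E_5_0, E_5_1]
  simp only [Qe_0_0, Qe_0_1, Qe_0_3, Qe_0_4, Qe_1_0, Qe_1_1, Qe_1_3, Qe_1_4, Qe_4_0, Qe_4_1, Qe_4_3, Qe_4_4, Qe_5_0, Qe_5_1, Qe_5_3, Qe_5_4]
  ring

lemma key_4_1 : (Egen.submatrix (rE 4) (cE 1)).det = ((Qgen.submatrix (rQ 5) (cQ 1)).det) := by
  rw [show rE 4 = ![0,5] from rfl, show cE 1 = ![0,2] from rfl,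
    show rQ 5 = ![0,1,4,5] from rfl,
    show cQ 1 = ![0,1,2,4] from rfl,
    det2_sub, det4_sub, E_0_0, E_0_2, E_5_0, E_5_2]
  simp only [Qe_0_0, Qe_0_1, Qe_0_2, Qe_0_4, Qe_1_0, Qe_1_1, Qe_1_2, Qe_1_4, Qe_4_0, Qe_4_1, Qe_4_2, Qe_4_4, Qe_5_0, Qe_5_1, Qe_5_2, Qe_5_4]
  ring

lemma key_4_2 : (Egen.submatrix (rE 4) (cE 2)).det = -((Qgen.submatrix (rQ 5) (cQ 2)).det) := by
  rw [show rE 4 = ![0,5] from rfl, show cE 2 = ![1,2] from rfl,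
    show rQ 5 = ![0,1,4,5] from rfl,
    show cQ 2 = ![0,1,2,3] from rfl,
    det2_sub, det4_sub, E_0_1, E_0_2, E_5_1, E_5_2]
  simp only [Qe_0_0, Qe_0_1, Qe_0_2, Qe_0_3, Qe_1_0, Qe_1_1, Qe_1_2, Qe_1_3, Qe_4_0, Qe_4_1, Qe_4_2, Qe_4_3, Qe_5_0, Qe_5_1, Qe_5_2, Qe_5_3]
  ring

lemma key_5_0 : (Egen.submatrix (rE 5) (cE 0)).det = ((Qgen.submatrix (rQ 2) (cQ 0)).det) := by
  rw [show rE 5 = ![1,2] from rfl, show cE 0 = ![0,1] from rfl,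
    show rQ 2 = ![0,1,2,5] from rfl,
    show cQ 0 = ![0,1,3,4] from rfl,
    det2_sub, det4_sub, E_1_0, E_1_1, E_2_0, E_2_1]
  simp only [Qe_0_0, Qe_0_1, Qe_0_3, Qe_0_4, Qe_1_0, Qe_1_1, Qe_1_3, Qe_1_4, Qe_2_0, Qe_2_1, Qe_2_3, Qe_2_4, Qe_5_0, Qe_5_1, Qe_5_3, Qe_5_4]
  ring

lemma key_5_1 : (Egen.submatrix (rE 5) (cE 1)).det = -((Qgen.submatrix (rQ 2) (cQ 1)).det) := by
  rw [show rE 5 = ![1,2] from rfl, show cE 1 = ![0,2] from rfl,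
    show rQ 2 = ![0,1,2,5] from rfl,
    show cQ 1 = ![0,1,2,4] from rfl,
    det2_sub, det4_sub, E_1_0, E_1_2, E_2_0, E_2_2]
  simp only [Qe_0_0, Qe_0_1, Qe_0_2, Qe_0_4, Qe_1_0, Qe_1_1, Qe_1_2, Qe_1_4, Qe_2_0, Qe_2_1, Qe_2_2, Qe_2_4, Qe_5_0, Qe_5_1, Qe_5_2, Qe_5_4]
  ring

lemma key_5_2 : (Egen.submatrix (rE 5) (cE 2)).det = ((Qgen.submatrix (rQ 2) (cQ 2)).det) := by
  rw [show rE 5 = ![1,2] from rfl, show cE 2 = ![1,2] from rfl,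
    show rQ 2 = ![0,1,2,5] from rfl,
    show cQ 2 = ![0,1,2,3] from rfl,
    det2_sub, det4_sub, E_1_1, E_1_2, E_2_1, E_2_2]
  simp only [Qe_0_0, Qe_0_1, Qe_0_2, Qe_0_3, Qe_1_0, Qe_1_1, Qe_1_2, Qe_1_3, Qe_2_0, Qe_2_1, Qe_2_2, Qe_2_3, Qe_5_0, Qe_5_1, Qe_5_2, Qe_5_3]
  ring

lemma key_6_0 : (Egen.submatrix (rE 6) (cE 0)).det = -((Qgen.submatrix (rQ 6) (cQ 0)).det) := by
  rw [show rE 6 = ![1,3] from rfl, show cE 0 = ![0,1] from rfl,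
    show rQ 6 = ![0,2,3,4] from rfl,
    show cQ 0 = ![0,1,3,4] from rfl,
    det2_sub, det4_sub, E_1_0, E_1_1, E_3_0, E_3_1]
  simp only [Qe_0_0, Qe_0_1, Qe_0_3, Qe_0_4, Qe_2_0, Qe_2_1, Qe_2_3, Qe_2_4, Qe_3_0, Qe_3_1, Qe_3_3, Qe_3_4, Qe_4_0, Qe_4_1, Qe_4_3, Qe_4_4]
  ring

lemma key_6_1 : (Egen.submatrix (rE 6) (cE 1)).det = ((Qgen.submatrix (rQ 6) (cQ 1)).det) := by
  rw [show rE 6 = ![1,3] from rfl, show cE 1 = ![0,2] from rfl,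
    show rQ 6 = ![0,2,3,4] from rfl,
    show cQ 1 = ![0,1,2,4] from rfl,
    det2_sub, det4_sub, E_1_0, E_1_2, E_3_0, E_3_2]
  simp only [Qe_0_0, Qe_0_1, Qe_0_2, Qe_0_4, Qe_2_0, Qe_2_1, Qe_2_2, Qe_2_4, Qe_3_0, Qe_3_1, Qe_3_2, Qe_3_4, Qe_4_0, Qe_4_1, Qe_4_2, Qe_4_4]
  ring

lemma key_6_2 : (Egen.submatrix (rE 6) (cE 2)).det = -((Qgen.submatrix (rQ 6) (cQ 2)).det) := by
  rw [show rE 6 = ![1,3] from rfl, show cE 2 = ![1,2] from rfl,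
    show rQ 6 = ![0,2,3,4] from rfl,
    show cQ 2 = ![0,1,2,3] from rfl,
    det2_sub, det4_sub, E_1_1, E_1_2, E_3_1, E_3_2]
  simp only [Qe_0_0, Qe_0_1, Qe_0_2, Qe_0_3, Qe_2_0, Qe_2_1, Qe_2_2, Qe_2_3, Qe_3_0, Qe_3_1, Qe_3_2, Qe_3_3, Qe_4_0, Qe_4_1, Qe_4_2, Qe_4_3]
  ring

lemma key_7_0 : (Egen.submatrix (rE 7) (cE 0)).det = -((Qgen.submatrix (rQ 7) (cQ 0)).det) := by
  rw [show rE 7 = ![1,4] from rfl, show cE 0 = ![0,1] from rfl,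
    show rQ 7 = ![0,2,3,5] from rfl,
    show cQ 0 = ![0,1,3,4] from rfl,
    det2_sub, det4_sub, E_1_0, E_1_1, E_4_0, E_4_1]
  simp only [Qe_0_0, Qe_0_1, Qe_0_3, Qe_0_4, Qe_2_0, Qe_2_1, Qe_2_3, Qe_2_4, Qe_3_0, Qe_3_1, Qe_3_3, Qe_3_4, Qe_5_0, Qe_5_1, Qe_5_3, Qe_5_4]
  ring

lemma key_7_1 : (Egen.submatrix (rE 7) (cE 1)).det = ((Qgen.submatrix (rQ 7) (cQ 1)).det) := by
  rw [show rE 7 = ![1,4] from rfl, show cE 1 = ![0,2] from rfl,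
    show rQ 7 = ![0,2,3,5] from rfl,
    show cQ 1 = ![0,1,2,4] from rfl,
    det2_sub, det4_sub, E_1_0, E_1_2, E_4_0, E_4_2]
  simp only [Qe_0_0, Qe_0_1, Qe_0_2, Qe_0_4, Qe_2_0, Qe_2_1, Qe_2_2, Qe_2_4, Qe_3_0, Qe_3_1, Qe_3_2, Qe_3_4, Qe_5_0, Qe_5_1, Qe_5_2, Qe_5_4]
  ring

lemma key_7_2 : (Egen.submatrix (rE 7) (cE 2)).det = -((Qgen.submatrix (rQ 7) (cQ 2)).det) := by
  rw [show rE 7 = ![1,4] from rfl, show cE 2 = ![1,2] from rfl,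
    show rQ 7 = ![0,2,3,5] from rfl,
    show cQ 2 = ![0,1,2,3] from rfl,
    det2_sub, det4_sub, E_1_1, E_1_2, E_4_1, E_4_2]
  simp only [Qe_0_0, Qe_0_1, Qe_0_2, Qe_0_3, Qe_2_0, Qe_2_1, Qe_2_2, Qe_2_3, Qe_3_0, Qe_3_1, Qe_3_2, Qe_3_3, Qe_5_0, Qe_5_1, Qe_5_2, Qe_5_3]
  ring

lemma key_8_0 : (Egen.submatrix (rE 8) (cE 0)).det = -((Qgen.submatrix (rQ 8) (cQ 0)).det) := by
  rw [show rE 8 = ![1,5] from rfl, show cE 0 = ![0,1] from rfl,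
    show rQ 8 = ![0,2,4,5] from rfl,
    show cQ 0 = ![0,1,3,4] from rfl,
    det2_sub, det4_sub, E_1_0, E_1_1, E_5_0, E_5_1]
  simp only [Qe_0_0, Qe_0_1, Qe_0_3, Qe_0_4, Qe_2_0, Qe_2_1, Qe_2_3, Qe_2_4, Qe_4_0, Qe_4_1, Qe_4_3, Qe_4_4, Qe_5_0, Qe_5_1, Qe_5_3, Qe_5_4]
  ring

lemma key_8_1 : (Egen.submatrix (rE 8) (cE 1)).det = ((Qgen.submatrix (rQ 8) (cQ 1)).det) := by
  rw [show rE 8 = ![1,5] from rfl, show cE 1 = ![0,2] from rfl,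
    show rQ 8 = ![0,2,4,5] from rfl,
    show cQ 1 = ![0,1,2,4] from rfl,
    det2_sub, det4_sub, E_1_0, E_1_2, E_5_0, E_5_2]
  simp only [Qe_0_0, Qe_0_1, Qe_0_2, Qe_0_4, Qe_2_0, Qe_2_1, Qe_2_2, Qe_2_4, Qe_4_0, Qe_4_1, Qe_4_2, Qe_4_4, Qe_5_0, Qe_5_1, Qe_5_2, Qe_5_4]
  ring

lemma key_8_2 : (Egen.submatrix (rE 8) (cE 2)).det = -((Qgen.submatrix (rQ 8) (cQ 2)).det) := by
  rw [show rE 8 = ![1,5] from rfl, show cE 2 = ![1,2] from rfl,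
    show rQ 8 = ![0,2,4,5] from rfl,
    show cQ 2 = ![0,1,2,3] from rfl,
    det2_sub, det4_sub, E_1_1, E_1_2, E_5_1, E_5_2]
  simp only [Qe_0_0, Qe_0_1, Qe_0_2, Qe_0_3, Qe_2_0, Qe_2_1, Qe_2_2, Qe_2_3, Qe_4_0, Qe_4_1, Qe_4_2, Qe_4_3, Qe_5_0, Qe_5_1, Qe_5_2, Qe_5_3]
  ring

lemma key_9_0 : (Egen.submatrix (rE 9) (cE 0)).det = -((Qgen.submatrix (rQ 10) (cQ 0)).det) := by
  rw [show rE 9 = ![2,3] from rfl, show cE 0 = ![0,1] from rfl,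
    show rQ 10 = ![1,2,3,4] from rfl,
    show cQ 0 = ![0,1,3,4] from rfl,
    det2_sub, det4_sub, E_2_0, E_2_1, E_3_0, E_3_1]
  simp only [Qe_1_0, Qe_1_1, Qe_1_3, Qe_1_4, Qe_2_0, Qe_2_1, Qe_2_3, Qe_2_4, Qe_3_0, Qe_3_1, Qe_3_3, Qe_3_4, Qe_4_0, Qe_4_1, Qe_4_3, Qe_4_4]
  ring

lemma key_9_1 : (Egen.submatrix (rE 9) (cE 1)).det = ((Qgen.submatrix (rQ 10) (cQ 1)).det) := by
  rw [show rE 9 = ![2,3] from rfl, show cE 1 = ![0,2] from rfl,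
    show rQ 10 = ![1,2,3,4] from rfl,
    show cQ 1 = ![0,1,2,4] from rfl,
    det2_sub, det4_sub, E_2_0, E_2_2, E_3_0, E_3_2]
  simp only [Qe_1_0, Qe_1_1, Qe_1_2, Qe_1_4, Qe_2_0, Qe_2_1, Qe_2_2, Qe_2_4, Qe_3_0, Qe_3_1, Qe_3_2, Qe_3_4, Qe_4_0, Qe_4_1, Qe_4_2, Qe_4_4]
  ring

lemma key_9_2 : (Egen.submatrix (rE 9) (cE 2)).det = -((Qgen.submatrix (rQ 10) (cQ 2)).det) := by
  rw [show rE 9 = ![2,3] from rfl, show cE 2 = ![1,2] from rfl,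
    show rQ 10 = ![1,2,3,4] from rfl,
    show cQ 2 = ![0,1,2,3] from rfl,
    det2_sub, det4_sub, E_2_1, E_2_2, E_3_1, E_3_2]
  simp only [Qe_1_0, Qe_1_1, Qe_1_2, Qe_1_3, Qe_2_0, Qe_2_1, Qe_2_2, Qe_2_3, Qe_3_0, Qe_3_1, Qe_3_2, Qe_3_3, Qe_4_0, Qe_4_1, Qe_4_2, Qe_4_3]
  ring

lemma key_10_0 : (Egen.submatrix (rE 10) (cE 0)).det = -((Qgen.submatrix (rQ 11) (cQ 0)).det) := by
  rw [show rE 10 = ![2,4] from rfl, show cE 0 = ![0,1] from rfl,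
    show rQ 11 = ![1,2,3,5] from rfl,
    show cQ 0 = ![0,1,3,4] from rfl,
    det2_sub, det4_sub, E_2_0, E_2_1, E_4_0, E_4_1]
  simp only [Qe_1_0, Qe_1_1, Qe_1_3, Qe_1_4, Qe_2_0, Qe_2_1, Qe_2_3, Qe_2_4, Qe_3_0, Qe_3_1, Qe_3_3, Qe_3_4, Qe_5_0, Qe_5_1, Qe_5_3, Qe_5_4]
  ring

lemma key_10_1 : (Egen.submatrix (rE 10) (cE 1)).det = ((Qgen.submatrix (rQ 11) (cQ 1)).det) := by
  rw [show rE 10 = ![2,4] from rfl, show cE 1 = ![0,2] from rfl,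
    show rQ 11 = ![1,2,3,5] from rfl,
    show cQ 1 = ![0,1,2,4] from rfl,
    det2_sub, det4_sub, E_2_0, E_2_2, E_4_0, E_4_2]
  simp only [Qe_1_0, Qe_1_1, Qe_1_2, Qe_1_4, Qe_2_0, Qe_2_1, Qe_2_2, Qe_2_4, Qe_3_0, Qe_3_1, Qe_3_2, Qe_3_4, Qe_5_0, Qe_5_1, Qe_5_2, Qe_5_4]
  ring

lemma key_10_2 : (Egen.submatrix (rE 10) (cE 2)).det = -((Qgen.submatrix (rQ 11) (cQ 2)).det) := by
  rw [show rE 10 = ![2,4] from rfl, show cE 2 = ![1,2] from rfl,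
    show rQ 11 = ![1,2,3,5] from rfl,
    show cQ 2 = ![0,1,2,3] from rfl,
    det2_sub, det4_sub, E_2_1, E_2_2, E_4_1, E_4_2]
  simp only [Qe_1_0, Qe_1_1, Qe_1_2, Qe_1_3, Qe_2_0, Qe_2_1, Qe_2_2, Qe_2_3, Qe_3_0, Qe_3_1, Qe_3_2, Qe_3_3, Qe_5_0, Qe_5_1, Qe_5_2, Qe_5_3]
  ring

lemma key_11_0 : (Egen.submatrix (rE 11) (cE 0)).det = -((Qgen.submatrix (rQ 12) (cQ 0)).det) := by
  rw [show rE 11 = ![2,5] from rfl, show cE 0 = ![0,1] from rfl,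
    show rQ 12 = ![1,2,4,5] from rfl,
    show cQ 0 = ![0,1,3,4] from rfl,
    det2_sub, det4_sub, E_2_0, E_2_1, E_5_0, E_5_1]
  simp only [Qe_1_0, Qe_1_1, Qe_1_3, Qe_1_4, Qe_2_0, Qe_2_1, Qe_2_3, Qe_2_4, Qe_4_0, Qe_4_1, Qe_4_3, Qe_4_4, Qe_5_0, Qe_5_1, Qe_5_3, Qe_5_4]
  ring

lemma key_11_1 : (Egen.submatrix (rE 11) (cE 1)).det = ((Qgen.submatrix (rQ 12) (cQ 1)).det) := by
  rw [show rE 11 = ![2,5] from rfl, show cE 1 = ![0,2] from rfl,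
    show rQ 12 = ![1,2,4,5] from rfl,
    show cQ 1 = ![0,1,2,4] from rfl,
    det2_sub, det4_sub, E_2_0, E_2_2, E_5_0, E_5_2]
  simp only [Qe_1_0, Qe_1_1, Qe_1_2, Qe_1_4, Qe_2_0, Qe_2_1, Qe_2_2, Qe_2_4, Qe_4_0, Qe_4_1, Qe_4_2, Qe_4_4, Qe_5_0, Qe_5_1, Qe_5_2, Qe_5_4]
  ring

lemma key_11_2 : (Egen.submatrix (rE 11) (cE 2)).det = -((Qgen.submatrix (rQ 12) (cQ 2)).det) := by
  rw [show rE 11 = ![2,5] from rfl, show cE 2 = ![1,2] from rfl,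
    show rQ 12 = ![1,2,4,5] from rfl,
    show cQ 2 = ![0,1,2,3] from rfl,
    det2_sub, det4_sub, E_2_1, E_2_2, E_5_1, E_5_2]
  simp only [Qe_1_0, Qe_1_1, Qe_1_2, Qe_1_3, Qe_2_0, Qe_2_1, Qe_2_2, Qe_2_3, Qe_4_0, Qe_4_1, Qe_4_2, Qe_4_3, Qe_5_0, Qe_5_1, Qe_5_2, Qe_5_3]
  ring

lemma key_12_0 : (Egen.submatrix (rE 12) (cE 0)).det = ((Qgen.submatrix (rQ 9) (cQ 0)).det) := by
  rw [show rE 12 = ![3,4] from rfl, show cE 0 = ![0,1] from rfl,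
    show rQ 9 = ![0,3,4,5] from rfl,
    show cQ 0 = ![0,1,3,4] from rfl,
    det2_sub, det4_sub, E_3_0, E_3_1, E_4_0, E_4_1]
  simp only [Qe_0_0, Qe_0_1, Qe_0_3, Qe_0_4, Qe_3_0, Qe_3_1, Qe_3_3, Qe_3_4, Qe_4_0, Qe_4_1, Qe_4_3, Qe_4_4, Qe_5_0, Qe_5_1, Qe_5_3, Qe_5_4]
  ring

lemma key_12_1 : (Egen.submatrix (rE 12) (cE 1)).det = -((Qgen.submatrix (rQ 9) (cQ 1)).det) := by
  rw [show rE 12 = ![3,4] from rfl, show cE 1 = ![0,2] from rfl,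
    show rQ 9 = ![0,3,4,5] from rfl,
    show cQ 1 = ![0,1,2,4] from rfl,
    det2_sub, det4_sub, E_3_0, E_3_2, E_4_0, E_4_2]
  simp only [Qe_0_0, Qe_0_1, Qe_0_2, Qe_0_4, Qe_3_0, Qe_3_1, Qe_3_2, Qe_3_4, Qe_4_0, Qe_4_1, Qe_4_2, Qe_4_4, Qe_5_0, Qe_5_1, Qe_5_2, Qe_5_4]
  ring

lemma key_12_2 : (Egen.submatrix (rE 12) (cE 2)).det = ((Qgen.submatrix (rQ 9) (cQ 2)).det) := by
  rw [show rE 12 = ![3,4] from rfl, show cE 2 = ![1,2] from rfl,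
    show rQ 9 = ![0,3,4,5] from rfl,
    show cQ 2 = ![0,1,2,3] from rfl,
    det2_sub, det4_sub, E_3_1, E_3_2, E_4_1, E_4_2]
  simp only [Qe_0_0, Qe_0_1, Qe_0_2, Qe_0_3, Qe_3_0, Qe_3_1, Qe_3_2, Qe_3_3, Qe_4_0, Qe_4_1, Qe_4_2, Qe_4_3, Qe_5_0, Qe_5_1, Qe_5_2, Qe_5_3]
  ring

lemma key_13_0 : (Egen.submatrix (rE 13) (cE 0)).det = ((Qgen.submatrix (rQ 13) (cQ 0)).det) := by
  rw [show rE 13 = ![3,5] from rfl, show cE 0 = ![0,1] from rfl,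
    show rQ 13 = ![1,3,4,5] from rfl,
    show cQ 0 = ![0,1,3,4] from rfl,
    det2_sub, det4_sub, E_3_0, E_3_1, E_5_0, E_5_1]
  simp only [Qe_1_0, Qe_1_1, Qe_1_3, Qe_1_4, Qe_3_0, Qe_3_1, Qe_3_3, Qe_3_4, Qe_4_0, Qe_4_1, Qe_4_3, Qe_4_4, Qe_5_0, Qe_5_1, Qe_5_3, Qe_5_4]
  ring

lemma key_13_1 : (Egen.submatrix (rE 13) (cE 1)).det = -((Qgen.submatrix (rQ 13) (cQ 1)).det) := by
  rw [show rE 13 = ![3,5] from rfl, show cE 1 = ![0,2] from rfl,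
    show rQ 13 = ![1,3,4,5] from rfl,
    show cQ 1 = ![0,1,2,4] from rfl,
    det2_sub, det4_sub, E_3_0, E_3_2, E_5_0, E_5_2]
  simp only [Qe_1_0, Qe_1_1, Qe_1_2, Qe_1_4, Qe_3_0, Qe_3_1, Qe_3_2, Qe_3_4, Qe_4_0, Qe_4_1, Qe_4_2, Qe_4_4, Qe_5_0, Qe_5_1, Qe_5_2, Qe_5_4]
  ring

lemma key_13_2 : (Egen.submatrix (rE 13) (cE 2)).det = ((Qgen.submatrix (rQ 13) (cQ 2)).det) := by
  rw [show rE 13 = ![3,5] from rfl, show cE 2 = ![1,2] from rfl,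
    show rQ 13 = ![1,3,4,5] from rfl,
    show cQ 2 = ![0,1,2,3] from rfl,
    det2_sub, det4_sub, E_3_1, E_3_2, E_5_1, E_5_2]
  simp only [Qe_1_0, Qe_1_1, Qe_1_2, Qe_1_3, Qe_3_0, Qe_3_1, Qe_3_2, Qe_3_3, Qe_4_0, Qe_4_1, Qe_4_2, Qe_4_3, Qe_5_0, Qe_5_1, Qe_5_2, Qe_5_3]
  ring

lemma key_14_0 : (Egen.submatrix (rE 14) (cE 0)).det = ((Qgen.submatrix (rQ 14) (cQ 0)).det) := by
  rw [show rE 14 = ![4,5] from rfl, show cE 0 = ![0,1] from rfl,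
    show rQ 14 = ![2,3,4,5] from rfl,
    show cQ 0 = ![0,1,3,4] from rfl,
    det2_sub, det4_sub, E_4_0, E_4_1, E_5_0, E_5_1]
  simp only [Qe_2_0, Qe_2_1, Qe_2_3, Qe_2_4, Qe_3_0, Qe_3_1, Qe_3_3, Qe_3_4, Qe_4_0, Qe_4_1, Qe_4_3, Qe_4_4, Qe_5_0, Qe_5_1, Qe_5_3, Qe_5_4]
  ring

lemma key_14_1 : (Egen.submatrix (rE 14) (cE 1)).det = -((Qgen.submatrix (rQ 14) (cQ 1)).det) := by
  rw [show rE 14 = ![4,5] from rfl, show cE 1 = ![0,2] from rfl,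
    show rQ 14 = ![2,3,4,5] from rfl,
    show cQ 1 = ![0,1,2,4] from rfl,
    det2_sub, det4_sub, E_4_0, E_4_2, E_5_0, E_5_2]
  simp only [Qe_2_0, Qe_2_1, Qe_2_2, Qe_2_4, Qe_3_0, Qe_3_1, Qe_3_2, Qe_3_4, Qe_4_0, Qe_4_1, Qe_4_2, Qe_4_4, Qe_5_0, Qe_5_1, Qe_5_2, Qe_5_4]
  ring

lemma key_14_2 : (Egen.submatrix (rE 14) (cE 2)).det = ((Qgen.submatrix (rQ 14) (cQ 2)).det) := by
  rw [show rE 14 = ![4,5] from rfl, show cE 2 = ![1,2] from rfl,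
    show rQ 14 = ![2,3,4,5] from rfl,
    show cQ 2 = ![0,1,2,3] from rfl,
    det2_sub, det4_sub, E_4_1, E_4_2, E_5_1, E_5_2]
  simp only [Qe_2_0, Qe_2_1, Qe_2_2, Qe_2_3, Qe_3_0, Qe_3_1, Qe_3_2, Qe_3_3, Qe_4_0, Qe_4_1, Qe_4_2, Qe_4_3, Qe_5_0, Qe_5_1, Qe_5_2, Qe_5_3]
  ring

lemma keyEQ : ∀ (i : Fin 15) (j : Fin 3),
    (Egen.submatrix (rE i) (cE j)).det = (Qgen.submatrix (rQ (rmap i)) (cQ j)).det ∨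
    (Egen.submatrix (rE i) (cE j)).det = -(Qgen.submatrix (rQ (rmap i)) (cQ j)).det := by
  intro i j
  fin_cases i <;> fin_cases j
  exacts [Or.inl key_0_0, Or.inr key_0_1, Or.inl key_0_2, Or.inl key_1_0, Or.inr key_1_1, Or.inl key_1_2, Or.inr key_2_0, Or.inl key_2_1, Or.inr key_2_2, Or.inr key_3_0, Or.inl key_3_1, Or.inr key_3_2, Or.inr key_4_0, Or.inl key_4_1, Or.inr key_4_2, Or.inl key_5_0, Or.inr key_5_1, Or.inl key_5_2, Or.inr key_6_0, Or.inl key_6_1, Or.inr key_6_2, Or.inr key_7_0, Or.inl key_7_1, Or.inr key_7_2, Or.inr key_8_0, Or.inl key_8_1, Or.inr key_8_2, Or.inr key_9_0, Or.inl key_9_1, Or.inr key_9_2, Or.inr key_10_0, Or.inl key_10_1, Or.inr key_10_2, Or.inr key_11_0, Or.inl key_11_1, Or.inr key_11_2, Or.inl key_12_0, Or.inr key_12_1, Or.inl key_12_2, Or.inl key_13_0, Or.inr key_13_1, Or.inl key_13_2, Or.inl key_14_0, Or.inr key_14_1, Or.inl key_14_2]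

lemma rowsE_complete : ∀ a b : Fin 6, a < b → ∃ i : Fin 15, ![a,b] = rE i := by decide
lemma colsE_complete : ∀ a b : Fin 3, a < b → ∃ j : Fin 3, ![a,b] = cE j := by decide
lemma rowsQ_complete : ∀ a b c d : Fin 6, a<b → b<c → c<d → ∃ i : Fin 15, ![a,b,c,d] = rQ i := by
  decide
lemma colsQ_complete : ∀ c d : Fin 5, (1:Fin 5)<c → c<d → ∃ j : Fin 3, ![0,1,c,d] = cQ j := by
  decide
lemma rQ_inj : ∀ i, Function.Injective (rQ i) := by decide
lemma cQ_inj : ∀ j, Function.Injective (cQ j) := by decide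
lemma rE_inj : ∀ i, Function.Injective (rE i) := by decide
lemma cE_inj : ∀ j, Function.Injective (cE j) := by decide
lemma cQ_mem0 : ∀ j, ∃ t, cQ j t = 0 := by decide
lemma cQ_mem1 : ∀ j, ∃ t, cQ j t = 1 := by decide
lemma rmap_rmapinv : ∀ m, rmap (rmapinv m) = m := by decide

lemma pm_trans {a b c : PR} (h1 : a = b ∨ a = -b) (h2 : b = c ∨ b = -c) :
    a = c ∨ a = -c := by
  rcases h1 with rfl|rfl <;> rcases h2 with h|h <;> simp [h]

lemma pm_symm {a b : PR} (h : a = b ∨ a = -b) : b = a ∨ b = -a := by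
  rcases h with rfl|rfl <;> simp

lemma sorted_factor {k n : ℕ} (f : Fin k → Fin n) (hf : Function.Injective f) :
    ∃ (g : Fin k → Fin n) (σ : Equiv.Perm (Fin k)),
      StrictMono g ∧ Set.range g = Set.range f ∧ f = g ∘ σ := by
  refine ⟨f ∘ Tuple.sort f, (Tuple.sort f)⁻¹, ?_, ?_, ?_⟩
  · exact (Tuple.monotone_sort f).strictMono_of_injective
      (hf.comp (Tuple.sort f).injective)
  · exact Function.Surjective.range_comp (Tuple.sort f).surjective f
  · funext x
    simp [Function.comp]

lemma det_perm_pm {k : ℕ} (A : Matrix (Fin k) (Fin k) PR) (σ τ : Equiv.Perm (Fin k)) :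
    (A.submatrix σ τ).det = A.det ∨ (A.submatrix σ τ).det = -A.det := by
  have h : A.submatrix ⇑σ ⇑τ = (A.submatrix id ⇑τ).submatrix ⇑σ id := rfl
  rw [h, Matrix.det_permute, Matrix.det_permute']
  rcases Int.units_eq_one_or (Equiv.Perm.sign σ) with h1|h1 <;>
    rcases Int.units_eq_one_or (Equiv.Perm.sign τ) with h2|h2 <;>
      rw [h1, h2] <;> simp

/-- Up to sign, the 2×2 minors of `E` and the 4×4 minors of `Q` involving the first two
columns coincide. -/
theorem minors2E_eq_minors4Q :
    (∀ (r : Fin 2 → Fin 6) (c : Fin 2 → Fin 3),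
        Function.Injective r → Function.Injective c →
        ∃ (r' : Fin 4 → Fin 6) (c' : Fin 4 → Fin 5),
          Function.Injective r' ∧ Function.Injective c' ∧
          (0 : Fin 5) ∈ Set.range c' ∧ (1 : Fin 5) ∈ Set.range c' ∧
          ((Egen.submatrix r c).det = (Qgen.submatrix r' c').det ∨
            (Egen.submatrix r c).det = -(Qgen.submatrix r' c').det)) ∧
    (∀ (r' : Fin 4 → Fin 6) (c' : Fin 4 → Fin 5),
        Function.Injective r' → Function.Injective c' →
        (0 : Fin 5) ∈ Set.range c' → (1 : Fin 5) ∈ Set.range c' →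
        ∃ (r : Fin 2 → Fin 6) (c : Fin 2 → Fin 3),
          Function.Injective r ∧ Function.Injective c ∧
          ((Qgen.submatrix r' c').det = (Egen.submatrix r c).det ∨
            (Qgen.submatrix r' c').det = -(Egen.submatrix r c).det)) := by
  constructor
  · intro r c hr hc
    obtain ⟨r₀, σ, hrm, hrr, hre⟩ := sorted_factor r hr
    obtain ⟨c₀, τ, hcm, hcr, hce⟩ := sorted_factor c hc
    have hrfun : r₀ = ![r₀ 0, r₀ 1] := by funext x; fin_cases x <;> rfl
    have hcfun : c₀ = ![c₀ 0, c₀ 1] := by funext x; fin_cases x <;> rfl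
    obtain ⟨i, hi⟩ := rowsE_complete (r₀ 0) (r₀ 1) (hrm (by decide))
    obtain ⟨j, hj⟩ := colsE_complete (c₀ 0) (c₀ 1) (hcm (by decide))
    have hiq : r₀ = rE i := by rw [hrfun, hi]
    have hjq : c₀ = cE j := by rw [hcfun, hj]
    refine ⟨rQ (rmap i), cQ j, rQ_inj _, cQ_inj _,
      Set.mem_range.mpr (cQ_mem0 j), Set.mem_range.mpr (cQ_mem1 j), ?_⟩
    have hsub : Egen.submatrix r c = (Egen.submatrix r₀ c₀).submatrix σ τ := by
      rw [hre, hce]; rfl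
    have h1 := det_perm_pm (Egen.submatrix r₀ c₀) σ τ
    rw [← hsub] at h1
    have h2 := keyEQ i j
    rw [← hiq, ← hjq] at h2
    exact pm_trans h1 h2
  · intro r' c' hr hc h0 h1
    obtain ⟨r₀, σ, hrm, hrr, hre⟩ := sorted_factor r' hr
    obtain ⟨c₀, τ, hcm, hcr, hce⟩ := sorted_factor c' hc
    have hrfun : r₀ = ![r₀ 0, r₀ 1, r₀ 2, r₀ 3] := by funext x; fin_cases x <;> rfl
    have hcfun : c₀ = ![c₀ 0, c₀ 1, c₀ 2, c₀ 3] := by funext x; fin_cases x <;> rfl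
    have h0' : (0:Fin 5) ∈ Set.range c₀ := hcr ▸ h0
    have h1' : (1:Fin 5) ∈ Set.range c₀ := hcr ▸ h1
    obtain ⟨x, hx⟩ := h0'
    obtain ⟨y, hy⟩ := h1'
    have e00 : c₀ 0 = 0 := by
      have h := hcm.monotone (Fin.zero_le x)
      rw [hx] at h
      exact Fin.le_zero_iff.mp h
    have e11 : c₀ 1 = 1 := by
      have hy1 : (1:Fin 4) ≤ y := by
        by_contra hcon
        push_neg at hcon
        have hv := Fin.lt_def.mp hcon
        have hv1 : ((1:Fin 4):ℕ) = 1 := rfl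
        have hv0 : ((0:Fin 4):ℕ) = 0 := rfl
        have hy0 : y = 0 := Fin.ext (by omega)
        rw [hy0, e00] at hy
        exact absurd hy (by decide)
      have hle : c₀ 1 ≤ 1 := by rw [← hy]; exact hcm.monotone hy1
      have hgt : c₀ 0 < c₀ 1 := hcm (by decide)
      rw [e00] at hgt
      have hv1 : ((1:Fin 5) : ℕ) = 1 := rfl
      have hv0 : ((0:Fin 5) : ℕ) = 0 := rfl
      have hl := Fin.lt_def.mp hgt
      have hl2 := Fin.le_def.mp hle
      apply Fin.ext
      omega
    have h12 : c₀ 1 < c₀ 2 := hcm (by decide)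
    have h23 : c₀ 2 < c₀ 3 := hcm (by decide)
    rw [e11] at h12
    obtain ⟨j, hj⟩ := colsQ_complete (c₀ 2) (c₀ 3) h12 h23
    have hjq : c₀ = cQ j := by rw [hcfun, ← hj, e00, e11]
    obtain ⟨m, hm⟩ := rowsQ_complete (r₀ 0) (r₀ 1) (r₀ 2) (r₀ 3)
      (hrm (by decide)) (hrm (by decide)) (hrm (by decide))
    have hmq : r₀ = rQ m := by rw [hrfun, hm]
    refine ⟨rE (rmapinv m), cE j, rE_inj _, cE_inj _, ?_⟩
    have hsub : Qgen.submatrix r' c' = (Qgen.submatrix r₀ c₀).submatrix σ τ := by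
      rw [hre, hce]; rfl
    have hq1 := det_perm_pm (Qgen.submatrix r₀ c₀) σ τ
    rw [← hsub] at hq1
    have hq2 := keyEQ (rmapinv m) j
    rw [rmap_rmapinv m, ← hmq, ← hjq] at hq2
    exact pm_trans hq1 (pm_symm hq2)
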